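/- For every nonzero object A ∈ A, the class of A in the Grothendieck group K(A) and the class [A] of A in the Grothendieck group K(R) are both nonzero. -/
import Mathlib


open CategoryTheory CategoryTheory.Limits Opposite

noncomputable section

universe u

variable (k : Type) [Field k] [Fintype k]
variable (R : Type u) [SmallCategory R] [Abelian R] [Linear k R] [EnoughProjectives R]

/-- The objects `A` of `R` such that `Hom(M, A)` is a finite set for every `M`. -/
def IsFinHom (A : R) : Prop := ∀ M : R, Finite (M ⟶ A)

/-- The Euler form `⟨M,A⟩ = dim Hom(M,A) - dim Ext¹(M,A)`. -/
def euler (M A : R) : ℤ :=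
  (Module.finrank k (M ⟶ A) : ℤ) -
    (Module.finrank k (((_root_.Ext k R 1).obj (op M)).obj A) : ℤ)

/-- The set of relations defining the Grothendieck group of `R`. -/
def sesSet : Set (FreeAbelianGroup R) :=
  {x | ∃ S : ShortComplex R, S.ShortExact ∧
    x = FreeAbelianGroup.of S.X₂ - FreeAbelianGroup.of S.X₁ - FreeAbelianGroup.of S.X₃}

/-- The Grothendieck group `K(R)`. -/
abbrev K0 := FreeAbelianGroup R ⧸ AddSubgroup.closure (sesSet R)

/-- The class of an object in `K(R)`. -/
def K0.cls (X : R) : K0 R := QuotientAddGroup.mk (FreeAbelianGroup.of X)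

/-- The set of relations defining the Grothendieck group of the subcategory `A`. -/
def sesSetA : Set (FreeAbelianGroup {A : R // IsFinHom R A}) :=
  {x | ∃ (S : ShortComplex R) (h1 : IsFinHom R S.X₁) (h2 : IsFinHom R S.X₂)
      (h3 : IsFinHom R S.X₃), S.ShortExact ∧
    x = FreeAbelianGroup.of ⟨S.X₂, h2⟩ - FreeAbelianGroup.of ⟨S.X₁, h1⟩ -
      FreeAbelianGroup.of ⟨S.X₃, h3⟩}

/-- The Grothendieck group `K(A)`. -/
abbrev KA := FreeAbelianGroup {A : R // IsFinHom R A} ⧸ AddSubgroup.closure (sesSetA R)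

/-- The class of an object of `A` in `K(A)`. -/
def KA.cls (A : {A : R // IsFinHom R A}) : KA R := QuotientAddGroup.mk (FreeAbelianGroup.of A)

/-- `R` is hereditary, i.e. of global dimension at most 1. -/
def Hereditary : Prop :=
  ∀ X Y : R, Subsingleton (((_root_.Ext k R 2).obj (op X)).obj Y)

/-- Condition (c): cancellation for projectives. -/
def CondC : Prop :=
  ∀ P Q M : R, Projective P → Projective Q → Projective M →
    Nonempty ((M ⊞ P) ≅ (M ⊞ Q)) → Nonempty (P ≅ Q)

/-- Condition (d): every element of `K(R)` is a `ℚ`-linear combination of classes of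
objects of `A`. -/
def CondD : Prop :=
  ∀ x : K0 R, ∃ n : ℕ, n ≠ 0 ∧ (n : ℤ) • x ∈
    AddSubgroup.closure (Set.range fun A : {A : R // IsFinHom R A} => K0.cls R A.1)

/-- Condition (e). -/
def CondE : Prop :=
  ∀ A B : R, IsFinHom R A → IsFinHom R B → K0.cls R A = K0.cls R B →
    ∀ P : R, Projective P → Nat.card (P ⟶ A) = Nat.card (P ⟶ B)


section Aux

open ZeroObject

lemma isFinHom_zero : IsFinHom R 0 := fun M => by
  have : Subsingleton (M ⟶ (0 : R)) := ⟨fun f g => (isZero_zero R).eq_of_tgt f g⟩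
  infer_instance

lemma K0.cls_zero : K0.cls R 0 = 0 := by
  rw [K0.cls, QuotientAddGroup.eq_zero_iff]
  have h : (- FreeAbelianGroup.of (0 : R)) ∈ AddSubgroup.closure (sesSet R) := by
    apply AddSubgroup.subset_closure
    refine ⟨ShortComplex.mk (0 : (0:R) ⟶ 0) (0 : (0:R) ⟶ 0) (by simp), ?_, by abel⟩
    exact { exact := ShortComplex.exact_of_isZero_X₂ _ (isZero_zero R)
            mono_f := by dsimp; infer_instance
            epi_g := by dsimp; infer_instance }
  simpa using neg_mem h

lemma K0_ne_zero (he : CondE R) (A : R) (hA : IsFinHom R A) (hne : ¬ IsZero A) :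
    K0.cls R A ≠ 0 := by
  intro h0
  have hcard := he A 0 hA (isFinHom_zero R) (by rw [h0, K0.cls_zero])
    (Projective.over A) inferInstance
  have h1 : Nat.card (Projective.over A ⟶ (0 : R)) = 1 := by
    have : Subsingleton (Projective.over A ⟶ (0 : R)) :=
      ⟨fun f g => (isZero_zero R).eq_of_tgt f g⟩
    have : Nonempty (Projective.over A ⟶ (0 : R)) := ⟨0⟩
    exact Nat.card_eq_one_iff_unique.2 ⟨‹_›, ‹_›⟩
  rw [h1] at hcard
  have hsub : Subsingleton (Projective.over A ⟶ A) :=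
    (Nat.card_eq_one_iff_unique.1 hcard).1
  have hπ : Projective.π A = 0 := hsub.elim _ _
  exact hne (IsZero.of_epi_eq_zero (Projective.π A) hπ)

/-- The natural map `K(A) → K(R)`. -/
def KAtoK0 : KA R →+ K0 R :=
  QuotientAddGroup.map _ _ (FreeAbelianGroup.map (Subtype.val : {A : R // IsFinHom R A} → R))
    (by
      refine (AddSubgroup.closure_le _).2 ?_
      rintro x ⟨S, h1, h2, h3, hS, rfl⟩
      simp only [SetLike.mem_coe, AddSubgroup.mem_comap, map_sub, FreeAbelianGroup.map_of_apply]
      exact AddSubgroup.subset_closure ⟨S, hS, rfl⟩)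

lemma KAtoK0_cls (A : {A : R // IsFinHom R A}) : KAtoK0 R (KA.cls R A) = K0.cls R A.1 := by
  rw [KA.cls, KAtoK0, K0.cls, QuotientAddGroup.map_mk, FreeAbelianGroup.map_of_apply]

end Aux

theorem stmt2 (hH : Hereditary k R) (hc : CondC R) (hd : CondD R) (he : CondE R)
    (A : R) (hA : IsFinHom R A) (hne : ¬ IsZero A) :
    KA.cls R ⟨A, hA⟩ ≠ 0 ∧ K0.cls R A ≠ 0 := by
  have h0 : K0.cls R A ≠ 0 := K0_ne_zero R he A hA hne
  refine ⟨fun h => h0 ?_, h0⟩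
  have := congrArg (KAtoK0 R) h
  rwa [KAtoK0_cls, map_zero] at this


end
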